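/- Let V be a vector lattice of bounded real-valued functions on a set Y containing the constant function 1, and let L : V → ℝ be a positive linear functional with L(1) > 0 that satisfies L(g_n) → 0 whenever g_n ∈ V and g_n(y) ↓ 0 for every y ∈ Y. Then there exists a measure μ on (Y, σ(V)), where σ(V) is the smallest σ-algebra making all members of V measurable, such that L(f) = L(1)·∫ f dμ for all f ∈ V, and μ(Y) = 1. -/

import Mathlib

open MeasureTheory Filter Set

namespace DanST

structure Pre (Y : Type*) where
  V : Set (Y → ℝ)
  I : (Y → ℝ) → ℝ
  bded : ∀ f ∈ V, ∃ C : ℝ, ∀ y, |f y| ≤ C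
  one_mem : (fun _ => (1 : ℝ)) ∈ V
  add_mem : ∀ f ∈ V, ∀ g ∈ V, f + g ∈ V
  smul_mem : ∀ (c : ℝ), ∀ f ∈ V, c • f ∈ V
  max_mem : ∀ f ∈ V, ∀ g ∈ V, f ⊔ g ∈ V
  I_add : ∀ f ∈ V, ∀ g ∈ V, I (f + g) = I f + I g
  I_smul : ∀ (c : ℝ), ∀ f ∈ V, I (c • f) = c * I f
  I_pos : ∀ f ∈ V, (∀ y, 0 ≤ f y) → 0 ≤ I f
  I_one : I (fun _ => (1 : ℝ)) = 1
  I_cont : ∀ g : ℕ → Y → ℝ, (∀ n, g n ∈ V) →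
      (∀ y, Antitone fun n => g n y) →
      (∀ y, Tendsto (fun n => g n y) atTop (nhds 0)) →
      Tendsto (fun n => I (g n)) atTop (nhds 0)

namespace Pre

variable {Y : Type*} (P : Pre Y)

theorem const_mem (c : ℝ) : (fun _ => c) ∈ P.V := by
  have := P.smul_mem c _ P.one_mem
  convert this using 1
  funext y; simp

theorem zero_mem : (0 : Y → ℝ) ∈ P.V := by
  have := P.const_mem 0
  convert this using 1
  rfl

theorem neg_mem {f} (hf : f ∈ P.V) : -f ∈ P.V := by
  have := P.smul_mem (-1) f hf
  convert this using 1
  funext y; simp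

theorem sub_mem {f g} (hf : f ∈ P.V) (hg : g ∈ P.V) : f - g ∈ P.V := by
  have := P.add_mem f hf (-g) (P.neg_mem hg)
  simpa [sub_eq_add_neg] using this

theorem min_mem {f g} (hf : f ∈ P.V) (hg : g ∈ P.V) : f ⊓ g ∈ P.V := by
  have : f ⊓ g = -((-f) ⊔ (-g)) := by
    funext y
    simp [Pi.inf_apply, Pi.sup_apply]
    rw [max_neg_neg]
    simp
  rw [this]
  exact P.neg_mem (P.max_mem _ (P.neg_mem hf) _ (P.neg_mem hg))

theorem I_zero : P.I 0 = 0 := by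
  have := P.I_smul 0 _ P.one_mem
  simpa using this

theorem I_sub {f g} (hf : f ∈ P.V) (hg : g ∈ P.V) : P.I (f - g) = P.I f - P.I g := by
  have h1 : P.I ((f - g) + g) = P.I (f - g) + P.I g :=
    P.I_add _ (P.sub_mem hf hg) _ hg
  have h2 : (f - g) + g = f := by funext y; simp
  rw [h2] at h1; linarith

theorem I_mono {f g} (hf : f ∈ P.V) (hg : g ∈ P.V) (h : f ≤ g) : P.I f ≤ P.I g := by
  have h1 : 0 ≤ P.I (g - f) := P.I_pos _ (P.sub_mem hg hf) (fun y => by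
    have := h y; simp [Pi.sub_apply]; linarith)
  have := P.I_sub hg hf
  linarith

theorem I_le_const {f} (hf : f ∈ P.V) {c : ℝ} (h : ∀ y, f y ≤ c) : P.I f ≤ c := by
  have := P.I_mono hf (P.const_mem c) (fun y => h y)
  have h2 : P.I (fun _ => c) = c := by
    have := P.I_smul c _ P.one_mem
    have e : c • (fun _ => (1:ℝ)) = (fun _ : Y => c) := by funext y; simp
    rw [e] at this; rw [this, P.I_one]; ring
  linarith

/-- Step A: Dini-type lemma for the functional. -/
theorem stepA {f : Y → ℝ} (hf : f ∈ P.V) {u : ℕ → Y → ℝ} (hu : ∀ n, u n ∈ P.V)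
    (hum : Monotone u) {g : Y → ℝ} (hlim : ∀ y, Tendsto (fun n => u n y) atTop (nhds (g y)))
    (hfg : f ≤ g) {ε : ℝ} (hε : 0 < ε) : ∃ n, P.I f ≤ P.I (u n) + ε := by
  set d : ℕ → Y → ℝ := fun n => (f - u n) ⊔ 0 with hd
  have hdV : ∀ n, d n ∈ P.V := fun n => P.max_mem _ (P.sub_mem hf (hu n)) _ P.zero_mem
  have hanti : ∀ y, Antitone fun n => d n y := by
    intro y a b hab
    simp only [hd, Pi.sup_apply, Pi.sub_apply, Pi.zero_apply]
    exact max_le_max (by have := hum hab y; linarith) le_rfl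
  have hto : ∀ y, Tendsto (fun n => d n y) atTop (nhds 0) := by
    intro y
    have h1 : Tendsto (fun n => max (f y - u n y) 0) atTop (nhds (max (f y - g y) 0)) :=
      ((tendsto_const_nhds.sub (hlim y)).max tendsto_const_nhds)
    have h2 : max (f y - g y) 0 = 0 := by
      have := hfg y; simp; linarith
    rw [h2] at h1
    exact h1
  have hcont := P.I_cont d hdV hanti hto
  rw [Metric.tendsto_atTop] at hcont
  obtain ⟨N, hN⟩ := hcont ε hε
  refine ⟨N, ?_⟩
  have h3 : f ≤ u N + d N := by
    intro y
    simp only [hd, Pi.add_apply, Pi.sup_apply, Pi.sub_apply, Pi.zero_apply]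
    have := le_max_left (f y - u N y) 0
    linarith
  have h4 : P.I f ≤ P.I (u N + d N) := P.I_mono hf (P.add_mem _ (hu N) _ (hdV N)) h3
  rw [P.I_add _ (hu N) _ (hdV N)] at h4
  have h5 := hN N le_rfl
  rw [Real.dist_eq] at h5
  have := abs_lt.1 h5
  linarith




def cand (g : Y → ℝ) : Set ℝ := P.I '' {f | f ∈ P.V ∧ f ≤ g}

noncomputable def J (g : Y → ℝ) : ℝ := sSup (P.cand g)

/-- A witness sequence for membership in the class `U`. -/
def Wit (u : ℕ → Y → ℝ) (g : Y → ℝ) : Prop :=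
  (∀ n, u n ∈ P.V) ∧ Monotone u ∧ (∀ n y, 0 ≤ u n y) ∧
    ∀ y, Tendsto (fun n => u n y) atTop (nhds (g y))

def Cover (A : Set Y) (g : Y → ℝ) : Prop :=
  (∃ u, P.Wit u g) ∧ (∀ y, g y ≤ 1) ∧ ∀ y ∈ A, g y = 1

noncomputable def m (A : Set Y) : ℝ := sInf (P.J '' {g | P.Cover A g})

theorem Wit.le {u g} (h : P.Wit u g) (n : ℕ) : u n ≤ g := by
  intro y
  refine ge_of_tendsto (h.2.2.2 y) ?_
  filter_upwards [eventually_ge_atTop n] with k hk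
  exact h.2.1 hk y

theorem Wit.nonneg {u g} (h : P.Wit u g) : ∀ y, 0 ≤ g y := fun y =>
  le_of_tendsto_of_tendsto' tendsto_const_nhds (h.2.2.2 y) (fun n => h.2.2.1 n y)

theorem cand_bddAbove {g : Y → ℝ} {C : ℝ} (hgC : ∀ y, g y ≤ C) : BddAbove (P.cand g) := by
  refine ⟨C, ?_⟩
  rintro x ⟨f, ⟨hf, hfg⟩, rfl⟩
  exact P.I_le_const hf (fun y => le_trans (hfg y) (hgC y))

theorem le_J {f g : Y → ℝ} {C : ℝ} (hf : f ∈ P.V) (hfg : f ≤ g) (hgC : ∀ y, g y ≤ C) :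
    P.I f ≤ P.J g :=
  le_csSup (P.cand_bddAbove hgC) ⟨f, ⟨hf, hfg⟩, rfl⟩

theorem J_le {g : Y → ℝ} {B : ℝ} (hg0 : ∀ y, 0 ≤ g y)
    (hB : ∀ f ∈ P.V, f ≤ g → P.I f ≤ B) : P.J g ≤ B := by
  refine csSup_le ⟨P.I 0, 0, ⟨P.zero_mem, fun y => hg0 y⟩, rfl⟩ ?_
  rintro x ⟨f, ⟨hf, hfg⟩, rfl⟩
  exact hB f hf hfg

theorem J_nonneg {g : Y → ℝ} {C : ℝ} (hg0 : ∀ y, 0 ≤ g y) (hgC : ∀ y, g y ≤ C) :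
    0 ≤ P.J g := by
  have := P.le_J P.zero_mem (fun y => hg0 y) hgC
  rwa [P.I_zero] at this

theorem J_of_mem {g : Y → ℝ} {C : ℝ} (hg : g ∈ P.V) (hgC : ∀ y, g y ≤ C) :
    P.J g = P.I g := by
  refine le_antisymm (csSup_le ⟨P.I g, g, ⟨hg, le_rfl⟩, rfl⟩ ?_) (P.le_J hg le_rfl hgC)
  rintro x ⟨f, ⟨hf, hfg⟩, rfl⟩
  exact P.I_mono hf hg hfg

theorem J_le_wit {u g} (h : P.Wit u g) (hg1 : ∀ y, g y ≤ 1) {ε : ℝ} (hε : 0 < ε) :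
    ∃ n, P.J g ≤ P.I (u n) + ε := by
  have hne : (P.cand g).Nonempty := ⟨P.I 0, 0, ⟨P.zero_mem, fun y => h.nonneg P y⟩, rfl⟩
  have hlt : P.J g - ε / 2 < sSup (P.cand g) := by
    have : P.J g = sSup (P.cand g) := rfl
    linarith
  obtain ⟨x, ⟨f, ⟨hf, hfg⟩, rfl⟩, hx⟩ := exists_lt_of_lt_csSup hne hlt
  obtain ⟨n, hn⟩ := P.stepA hf h.1 h.2.1 h.2.2.2 hfg (half_pos hε)
  exact ⟨n, by linarith⟩

theorem wit_le_J {u g} (h : P.Wit u g) (hg1 : ∀ y, g y ≤ 1) (n : ℕ) :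
    P.I (u n) ≤ P.J g :=
  P.le_J (h.1 n) (h.le P n) hg1

theorem cover_one (A : Set Y) : P.Cover A (fun _ => 1) := by
  refine ⟨⟨fun _ _ => 1, fun n => P.one_mem, fun a b _ => le_rfl, fun n y => zero_le_one, ?_⟩,
    fun y => le_rfl, fun y _ => rfl⟩
  intro y; exact tendsto_const_nhds

theorem m_bddBelow (A : Set Y) : BddBelow (P.J '' {g | P.Cover A g}) := by
  refine ⟨0, ?_⟩
  rintro x ⟨g, hg, rfl⟩
  exact P.J_nonneg (hg.1.choose_spec.nonneg P) hg.2.1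

theorem m_nonempty (A : Set Y) : (P.J '' {g | P.Cover A g}).Nonempty :=
  ⟨P.J (fun _ => 1), _, P.cover_one A, rfl⟩

theorem m_nonneg (A : Set Y) : 0 ≤ P.m A :=
  le_csInf (P.m_nonempty A) (fun x hx => by
    obtain ⟨g, hg, rfl⟩ := hx
    exact P.J_nonneg (hg.1.choose_spec.nonneg P) hg.2.1)

theorem m_le_J {A : Set Y} {g : Y → ℝ} (hg : P.Cover A g) : P.m A ≤ P.J g :=
  csInf_le (P.m_bddBelow A) ⟨g, hg, rfl⟩

theorem m_le_one (A : Set Y) : P.m A ≤ 1 := by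
  have := P.m_le_J (P.cover_one A)
  rwa [P.J_of_mem P.one_mem (fun y => le_rfl), P.I_one] at this

theorem m_empty : P.m (∅ : Set Y) = 0 := by
  refine le_antisymm ?_ (P.m_nonneg _)
  have hc : P.Cover ∅ (0 : Y → ℝ) := by
    refine ⟨⟨fun _ => 0, fun n => P.zero_mem, fun a b _ => le_rfl, fun n y => le_rfl, ?_⟩,
      fun y => zero_le_one, fun y hy => absurd hy (Set.notMem_empty y)⟩
    intro y; exact tendsto_const_nhds
  have := P.m_le_J hc
  rwa [P.J_of_mem P.zero_mem (fun y => (zero_le_one : (0:ℝ) ≤ 1)), P.I_zero] at this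

theorem m_mono {A B : Set Y} (h : A ⊆ B) : P.m A ≤ P.m B := by
  refine le_csInf (P.m_nonempty B) ?_
  rintro x ⟨g, hg, rfl⟩
  exact P.m_le_J ⟨hg.1, hg.2.1, fun y hy => hg.2.2 y (h hy)⟩

theorem m_univ : P.m (univ : Set Y) = 1 := by
  refine le_antisymm (P.m_le_one _) ?_
  refine le_csInf (P.m_nonempty _) ?_
  rintro x ⟨g, hg, rfl⟩
  have : g = (fun _ => 1) := funext (fun y => hg.2.2 y (mem_univ y))
  rw [this, P.J_of_mem P.one_mem (fun y => le_rfl), P.I_one]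


theorem sum_mem {ι : Type*} (s : Finset ι) (f : ι → Y → ℝ) (hf : ∀ i ∈ s, f i ∈ P.V) :
    (∑ i ∈ s, f i) ∈ P.V := by
  classical
  induction s using Finset.induction_on with
  | empty => simpa using P.zero_mem
  | insert a t hx ih =>
    rw [Finset.sum_insert hx]
    exact P.add_mem _ (hf a (Finset.mem_insert_self a t))
      _ (ih (fun i hi => hf i (Finset.mem_insert_of_mem hi)))

theorem I_sum {ι : Type*} (s : Finset ι) (f : ι → Y → ℝ) (hf : ∀ i ∈ s, f i ∈ P.V) :
    P.I (∑ i ∈ s, f i) = ∑ i ∈ s, P.I (f i) := by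
  classical
  induction s using Finset.induction_on with
  | empty => simpa using P.I_zero
  | insert a t hx ih =>
    rw [Finset.sum_insert hx, Finset.sum_insert hx,
      P.I_add _ (hf a (Finset.mem_insert_self a t))
        _ (P.sum_mem t f (fun i hi => hf i (Finset.mem_insert_of_mem hi))),
      ih (fun i hi => hf i (Finset.mem_insert_of_mem hi))]

/-- The diagonal witness for a countable supremum of `U`-functions. -/
theorem wit_diag (g : ℕ → Y → ℝ) (u : ℕ → ℕ → Y → ℝ) (hw : ∀ k, P.Wit (u k) (g k))
    (hg1 : ∀ k y, g k y ≤ 1) :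
    P.Wit (fun n => (Finset.range (n + 1)).sup' Finset.nonempty_range_add_one (fun k => u k n))
      (fun y => ⨆ k, g k y) := by
  set w : ℕ → Y → ℝ :=
    fun n => (Finset.range (n + 1)).sup' Finset.nonempty_range_add_one (fun k => u k n) with hwdef
  have hGbdd : ∀ y, BddAbove (Set.range fun k => g k y) := fun y =>
    ⟨1, by rintro x ⟨k, rfl⟩; exact hg1 k y⟩
  have hmemw : ∀ n, w n ∈ P.V := by
    intro n
    exact Finset.sup'_mem P.V (fun x hx y hy => P.max_mem x hx y hy) _ _ _
      (fun i _ => (hw i).1 n)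
  have hwmono : Monotone w := by
    intro a b hab
    refine Finset.sup'_le _ _ (fun k hk => ?_)
    calc u k a ≤ u k b := (hw k).2.1 hab
      _ ≤ w b := Finset.le_sup' (fun k => u k b)
          (Finset.mem_range.2 (Nat.lt_succ_of_le (le_trans (Nat.lt_succ_iff.1 (Finset.mem_range.1 hk)) hab)))
  have hwle : ∀ n k, k ≤ n → u k n ≤ w n := fun n k hk =>
    Finset.le_sup' (fun k => u k n) (Finset.mem_range.2 (Nat.lt_succ_of_le hk))
  have hwleg : ∀ n y, w n y ≤ ⨆ k, g k y := by
    intro n y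
    have : w n y = (Finset.range (n + 1)).sup' Finset.nonempty_range_add_one (fun k => u k n y) := by
      rw [hwdef]; exact Finset.sup'_apply _ _ _
    rw [this]
    refine Finset.sup'_le _ _ (fun k _ => ?_)
    exact le_trans ((hw k).le P n y) (le_ciSup (hGbdd y) k)
  have hwnn : ∀ n y, 0 ≤ w n y := by
    intro n y
    have h0 : u 0 n ≤ w n := hwle n 0 (Nat.zero_le n)
    exact le_trans ((hw 0).2.2.1 n y) (h0 y)
  refine ⟨hmemw, hwmono, hwnn, ?_⟩
  intro y
  have hmono' : Monotone (fun n => w n y) := fun a b hab => hwmono hab y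
  have hbdd : BddAbove (Set.range fun n => w n y) :=
    ⟨⨆ k, g k y, by rintro x ⟨n, rfl⟩; exact hwleg n y⟩
  have htend := tendsto_atTop_ciSup hmono' hbdd
  have heq : (⨆ n, w n y) = ⨆ k, g k y := by
    refine le_antisymm (ciSup_le (fun n => hwleg n y)) (ciSup_le (fun k => ?_))
    -- g k y ≤ ⨆ n, w n y
    have hbddw : BddAbove (Set.range fun n => w n y) := hbdd
    refine le_of_tendsto ((hw k).2.2.2 y) ?_
    filter_upwards [eventually_ge_atTop k] with n hn
    exact le_trans (hwle n k hn y) (le_ciSup hbddw n)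
  rwa [heq] at htend

/-- Countable subadditivity of `m`. -/
theorem m_iUnion (A : ℕ → Set Y) :
    ENNReal.ofReal (P.m (⋃ i, A i)) ≤ ∑' i, ENNReal.ofReal (P.m (A i)) := by
  refine ENNReal.le_of_forall_pos_le_add (fun ε hε _ => ?_)
  have hε3 : 0 < (ε : ℝ) / 3 := by positivity
  -- choose near-optimal covers
  have hcov : ∀ k : ℕ, ∃ g, P.Cover (A k) g ∧ P.J g ≤ P.m (A k) + (ε : ℝ) / 3 / 2 ^ k := by
    intro k
    have hlt : P.m (A k) < P.m (A k) + (ε : ℝ) / 3 / 2 ^ k := by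
      have : (0:ℝ) < (ε : ℝ) / 3 / 2 ^ k := by positivity
      linarith
    obtain ⟨x, ⟨g, hg, rfl⟩, hxlt⟩ := exists_lt_of_csInf_lt (P.m_nonempty (A k)) hlt
    exact ⟨g, hg, le_of_lt hxlt⟩
  choose g hgcov hgJ using hcov
  choose u hu using fun k => (hgcov k).1
  set G : Y → ℝ := fun y => ⨆ k, g k y with hGdef
  have hg1 : ∀ k y, g k y ≤ 1 := fun k y => (hgcov k).2.1 y
  have hGbdd : ∀ y, BddAbove (Set.range fun k => g k y) := fun y =>
    ⟨1, by rintro x ⟨k, rfl⟩; exact hg1 k y⟩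
  have hwit := P.wit_diag g u hu hg1
  have hG1 : ∀ y, G y ≤ 1 := fun y => ciSup_le (fun k => hg1 k y)
  have hGcov : P.Cover (⋃ i, A i) G := by
    refine ⟨⟨_, hwit⟩, hG1, ?_⟩
    intro y hy
    obtain ⟨i, hi⟩ := Set.mem_iUnion.1 hy
    refine le_antisymm (hG1 y) ?_
    calc (1:ℝ) = g i y := ((hgcov i).2.2 y hi).symm
      _ ≤ G y := le_ciSup (hGbdd y) i
  obtain ⟨n, hn⟩ := P.J_le_wit hwit hG1 hε3
  set w := fun n => (Finset.range (n + 1)).sup' Finset.nonempty_range_add_one (fun k => u k n)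
  -- w n ≤ ∑ k in range (n+1), u k n
  have hwsum : w n ≤ ∑ k ∈ Finset.range (n + 1), u k n := by
    refine Finset.sup'_le _ _ (fun k hk => ?_)
    intro y
    rw [Finset.sum_apply]
    refine Finset.single_le_sum (fun i _ => (hu i).2.2.1 n y) hk
  have hIw : P.I (w n) ≤ ∑ k ∈ Finset.range (n + 1), P.I (u k n) := by
    have h1 := P.I_mono (hwit.1 n) (P.sum_mem _ _ (fun i _ => (hu i).1 n)) hwsum
    rwa [P.I_sum _ _ (fun i _ => (hu i).1 n)] at h1
  have hIsum : ∑ k ∈ Finset.range (n + 1), P.I (u k n)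
      ≤ ∑ k ∈ Finset.range (n + 1), (P.m (A k) + (ε : ℝ) / 3 / 2 ^ k) := by
    refine Finset.sum_le_sum (fun k _ => ?_)
    exact le_trans (P.wit_le_J (hu k) (hg1 k) n) (hgJ k)
  have hgeom : ∑ k ∈ Finset.range (n + 1), (ε : ℝ) / 3 / 2 ^ k ≤ 2 * ((ε : ℝ) / 3) := by
    have he : ∑ k ∈ Finset.range (n + 1), (ε : ℝ) / 3 / 2 ^ k
        = (ε : ℝ) / 3 * ∑ k ∈ Finset.range (n + 1), (1 / 2 : ℝ) ^ k := by
      rw [Finset.mul_sum]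
      exact Finset.sum_congr rfl fun k _ => by rw [one_div, inv_pow]; ring
    rw [he]
    have h2 := sum_geometric_two_le (n + 1)
    nlinarith [hε3.le]
  have hmain : P.m (⋃ i, A i) ≤ ∑ k ∈ Finset.range (n + 1), P.m (A k) + (ε : ℝ) := by
    have h0 := P.m_le_J hGcov
    rw [Finset.sum_add_distrib] at hIsum
    have : (ε:ℝ)/3 + 2 * ((ε : ℝ)/3) ≤ ε := by linarith
    linarith
  calc ENNReal.ofReal (P.m (⋃ i, A i))
      ≤ ENNReal.ofReal (∑ k ∈ Finset.range (n + 1), P.m (A k) + (ε : ℝ)) :=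
        ENNReal.ofReal_le_ofReal hmain
    _ ≤ ENNReal.ofReal (∑ k ∈ Finset.range (n + 1), P.m (A k)) + ENNReal.ofReal (ε : ℝ) :=
        ENNReal.ofReal_add_le
    _ ≤ (∑ k ∈ Finset.range (n + 1), ENNReal.ofReal (P.m (A k))) + ε := by
        rw [ENNReal.ofReal_sum_of_nonneg (fun k _ => P.m_nonneg (A k)),
          ENNReal.ofReal_coe_nnreal]
    _ ≤ (∑' k, ENNReal.ofReal (P.m (A k))) + ε := by
        gcongr
        exact ENNReal.sum_le_tsum _

theorem real_le_of_forall_pos {a b : ℝ} (h : ∀ ε : ℝ, 0 < ε → a ≤ b + ε) : a ≤ b := by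
  by_contra hc
  push_neg at hc
  have := h ((a - b) / 2) (by linarith)
  linarith

theorem clamp_mem {f : Y → ℝ} (hf : f ∈ P.V) (c d : ℝ) :
    (fun y => min (max (c * f y + d) 0) 1) ∈ P.V := by
  have h1 : (c • f + d • (fun _ => (1:ℝ))) ∈ P.V :=
    P.add_mem _ (P.smul_mem c f hf) _ (P.smul_mem d _ P.one_mem)
  have h2 := P.min_mem (P.max_mem _ h1 _ P.zero_mem) P.one_mem
  convert h2 using 1
  funext y
  simp [Pi.inf_apply, Pi.sup_apply, smul_eq_mul]

theorem max_sub_add_min (x y : ℝ) : max (x - y) 0 + min x y = x := by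
  rcases le_total x y with h | h
  · rw [max_eq_right (by linarith), min_eq_left h]; ring
  · rw [min_eq_right h, max_eq_left (by linarith)]; ring

theorem m_split {f : Y → ℝ} (hf : f ∈ P.V) (a : ℝ) (A : Set Y) :
    P.m (A ∩ {y | a < f y}) + P.m (A \ {y | a < f y}) ≤ P.m A := by
  set E : Set Y := {y | a < f y} with hE
  set φ : ℕ → Y → ℝ := fun k y => min (max ((k : ℝ) * (f y - a)) 0) 1 with hφ
  have hφmem : ∀ k, φ k ∈ P.V := by
    intro k
    have h2 := P.clamp_mem hf (k : ℝ) (-((k:ℝ) * a))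
    have he : φ k = fun y => min (max ((k : ℝ) * f y + -((k:ℝ) * a)) 0) 1 := by
      funext y
      have : (k:ℝ) * (f y - a) = (k:ℝ) * f y + -((k:ℝ) * a) := by ring
      simp only [hφ, this]
    rw [he]; exact h2
  have hφ0 : ∀ k y, 0 ≤ φ k y := fun k y => le_min (le_max_right _ _) zero_le_one
  have hφ1 : ∀ k y, φ k y ≤ 1 := fun k y => min_le_right _ _
  have hφmono : ∀ y, Monotone fun k : ℕ => φ k y := by
    intro y k k' hk
    show φ k y ≤ φ k' y
    rcases le_or_gt (f y) a with h | h
    · have e0 : ∀ j : ℕ, φ j y = 0 := by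
        intro j
        have : (j : ℝ) * (f y - a) ≤ 0 := mul_nonpos_of_nonneg_of_nonpos (by positivity) (by linarith)
        simp [hφ, max_eq_right this]
      rw [e0 k, e0 k']
    · have : (k : ℝ) * (f y - a) ≤ (k' : ℝ) * (f y - a) := by
        have : (k:ℝ) ≤ (k':ℝ) := by exact_mod_cast hk
        nlinarith
      exact min_le_min (max_le_max this le_rfl) le_rfl
  have hφm : Monotone φ := fun k k' hk y => hφmono y hk
  set e : Y → ℝ := fun y => if a < f y then 1 else 0 with he
  have hφlim : ∀ y, Tendsto (fun k => φ k y) atTop (nhds (e y)) := by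
    intro y
    rcases lt_or_ge a (f y) with h | h
    · obtain ⟨N, hN⟩ := exists_nat_ge (1 / (f y - a))
      have hev : ∀ k ≥ N, φ k y = 1 := by
        intro k hk
        have hk' : (1 : ℝ) / (f y - a) ≤ (k : ℝ) := le_trans hN (by exact_mod_cast hk)
        have h1 : (1 : ℝ) ≤ (k : ℝ) * (f y - a) := by
          rw [div_le_iff₀ (by linarith)] at hk'
          linarith
        have : max ((k : ℝ) * (f y - a)) 0 = (k : ℝ) * (f y - a) :=
          max_eq_left (by linarith)
        simp [hφ, this, min_eq_right h1]
      have : e y = 1 := by simp [he, h]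
      rw [this]
      exact tendsto_atTop_of_eventually_const hev
    · have hev : ∀ k : ℕ, φ k y = 0 := by
        intro k
        have : (k : ℝ) * (f y - a) ≤ 0 := mul_nonpos_of_nonneg_of_nonpos (by positivity) (by linarith)
        simp [hφ, max_eq_right this]
      have : e y = 0 := by simp only [he]; rw [if_neg (not_lt.2 h)]
      rw [this]
      simp only [hev]
      exact tendsto_const_nhds
  -- main estimate
  refine real_le_of_forall_pos (fun ε hε => ?_)
  have key : ∀ x ∈ P.J '' {g | P.Cover A g}, P.m (A ∩ E) + P.m (A \ E) ≤ x + ε / 2 := by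
    rintro x ⟨g, hg, rfl⟩
    obtain ⟨u, hu⟩ := hg.1
    set ge : Y → ℝ := fun y => min (g y) (e y) with hge
    have hwitge : P.Wit (fun k => u k ⊓ φ k) ge := by
      refine ⟨fun k => P.min_mem (hu.1 k) (hφmem k), ?_, ?_, ?_⟩
      · intro k k' hk y
        simp only [Pi.inf_apply]
        exact min_le_min (hu.2.1 hk y) (hφmono y hk)
      · intro k y
        simp only [Pi.inf_apply]
        exact le_min (hu.2.2.1 k y) (hφ0 k y)
      · intro y
        simp only [Pi.inf_apply]
        exact (hu.2.2.2 y).min (hφlim y)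
    have hge1 : ∀ y, ge y ≤ 1 := fun y => le_trans (min_le_left _ _) (hg.2.1 y)
    have hcovge : P.Cover (A ∩ E) ge := by
      refine ⟨⟨_, hwitge⟩, hge1, ?_⟩
      rintro y ⟨hyA, hyE⟩
      have h1 : g y = 1 := hg.2.2 y hyA
      have h2 : e y = 1 := by
        simp only [he]; rw [if_pos (show a < f y from hyE)]
      simp [hge, h1, h2]
    obtain ⟨k, hk⟩ := P.J_le_wit hwitge hge1 (show (0:ℝ) < ε/4 by linarith)
    set h : Y → ℝ := fun y => max (g y - φ k y) 0 with hh
    set q : ℕ → Y → ℝ := fun n => (u n - φ k) ⊔ 0 with hq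
    have hwith : P.Wit q h := by
      refine ⟨fun n => P.max_mem _ (P.sub_mem (hu.1 n) (hφmem k)) _ P.zero_mem, ?_, ?_, ?_⟩
      · intro n n' hn y
        simp only [hq, Pi.sup_apply, Pi.sub_apply, Pi.zero_apply]
        exact max_le_max (by have := hu.2.1 hn y; linarith) le_rfl
      · intro n y
        simp only [hq, Pi.sup_apply, Pi.sub_apply, Pi.zero_apply]
        exact le_max_right _ _
      · intro y
        simp only [hq, Pi.sup_apply, Pi.sub_apply, Pi.zero_apply, hh]
        exact ((hu.2.2.2 y).sub tendsto_const_nhds).max tendsto_const_nhds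
    have hh1 : ∀ y, h y ≤ 1 := by
      intro y
      simp only [hh]
      have := hg.2.1 y
      have := hφ0 k y
      exact max_le (by linarith) zero_le_one
    have hcovh : P.Cover (A \ E) h := by
      refine ⟨⟨_, hwith⟩, hh1, ?_⟩
      rintro y ⟨hyA, hyE⟩
      have h1 : g y = 1 := hg.2.2 y hyA
      have h2 : φ k y = 0 := by
        have hfya : ¬ a < f y := hyE
        have : (k : ℝ) * (f y - a) ≤ 0 :=
          mul_nonpos_of_nonneg_of_nonpos (by positivity) (by push_neg at hfya; linarith)
        simp [hφ, max_eq_right this]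
      simp [hh, h1, h2]
    -- J h ≤ J g - I (u k ⊓ φ k) + ε / 2
    have hJh : P.J h ≤ P.J g - P.I (u k ⊓ φ k) + ε / 4 := by
      refine P.J_le (fun y => le_max_right _ _) (fun f' hf' hf'h => ?_)
      obtain ⟨n, hn⟩ := P.stepA hf' hwith.1 hwith.2.1 hwith.2.2.2 hf'h (show (0:ℝ) < ε/4 by linarith)
      set n' := max n k with hn'
      have hqmono : P.I (q n) ≤ P.I (q n') :=
        P.I_mono (hwith.1 n) (hwith.1 n') (hwith.2.1 (le_max_left n k))
      -- I (q n') = I (u n') - I (u n' ⊓ φ k)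
      have hiden : q n' + (u n' ⊓ φ k) = u n' := by
        funext y
        simp only [Pi.add_apply, hq, Pi.sup_apply, Pi.sub_apply, Pi.zero_apply, Pi.inf_apply]
        exact max_sub_add_min _ _
      have hIiden : P.I (q n') + P.I (u n' ⊓ φ k) = P.I (u n') := by
        rw [← P.I_add _ (hwith.1 n') _ (P.min_mem (hu.1 n') (hφmem k)), hiden]
      have hIun' : P.I (u n') ≤ P.J g := P.wit_le_J hu hg.2.1 n'
      have hIle : P.I (u k ⊓ φ k) ≤ P.I (u n' ⊓ φ k) := by
        refine P.I_mono (P.min_mem (hu.1 k) (hφmem k)) (P.min_mem (hu.1 n') (hφmem k)) ?_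
        intro y
        simp only [Pi.inf_apply]
        exact min_le_min (hu.2.1 (le_max_right n k) y) le_rfl
      linarith
    have h1 := P.m_le_J hcovge
    have h2 := P.m_le_J hcovh
    linarith
  obtain ⟨x, hx, hlt⟩ := exists_lt_of_csInf_lt (P.m_nonempty A)
    (show sInf (P.J '' {g | P.Cover A g}) < P.m A + ε / 2 by
      have h0 : P.m A = sInf (P.J '' {g | P.Cover A g}) := rfl
      linarith)
  have := key x hx
  linarith

noncomputable def nu : OuterMeasure Y where
  measureOf A := ENNReal.ofReal (P.m A)
  empty := by show ENNReal.ofReal (P.m ∅) = 0; rw [P.m_empty, ENNReal.ofReal_zero]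
  mono h := ENNReal.ofReal_le_ofReal (P.m_mono h)
  iUnion_nat s _ := P.m_iUnion s

theorem nu_apply (A : Set Y) : P.nu A = ENNReal.ofReal (P.m A) := rfl

theorem isCara {f : Y → ℝ} (hf : f ∈ P.V) (a : ℝ) :
    MeasurableSet[P.nu.caratheodory] {y | a < f y} := by
  rw [OuterMeasure.isCaratheodory_iff_le]
  intro t
  rw [P.nu_apply, P.nu_apply, P.nu_apply,
    ← ENNReal.ofReal_add (P.m_nonneg _) (P.m_nonneg _)]
  exact ENNReal.ofReal_le_ofReal (P.m_split hf a t)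

def mSpace : MeasurableSpace Y := ⨆ f ∈ P.V, MeasurableSpace.comap f (borel ℝ)

theorem le_cara : P.mSpace ≤ P.nu.caratheodory := by
  refine iSup₂_le fun f hf => ?_
  rw [borel_eq_generateFrom_Ioi, MeasurableSpace.comap_generateFrom]
  refine MeasurableSpace.generateFrom_le ?_
  rintro s ⟨t, ⟨aa, rfl⟩, rfl⟩
  exact P.isCara hf aa

noncomputable def mu : @Measure Y P.mSpace :=
  @OuterMeasure.toMeasure Y P.mSpace P.nu P.le_cara

theorem mu_apply {A : Set Y} (hA : MeasurableSet[P.mSpace] A) :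
    P.mu A = ENNReal.ofReal (P.m A) :=
  by letI := P.mSpace; exact toMeasure_apply P.nu P.le_cara hA

theorem isProb : @IsProbabilityMeasure Y P.mSpace P.mu := by
  letI := P.mSpace
  refine ⟨?_⟩
  rw [P.mu_apply MeasurableSet.univ, P.m_univ, ENNReal.ofReal_one]

theorem meas_f {f : Y → ℝ} (hf : f ∈ P.V) : @Measurable Y ℝ P.mSpace _ f := by
  letI := P.mSpace
  rw [measurable_iff_comap_le]
  rw [show (Real.measurableSpace : MeasurableSpace ℝ) = borel ℝ from BorelSpace.measurable_eq]
  exact le_iSup₂ (f := fun (f : Y → ℝ) (_ : f ∈ P.V) => MeasurableSpace.comap f (borel ℝ)) f hf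

theorem I_le_m {g : Y → ℝ} (hg : g ∈ P.V) (hg1 : ∀ y, g y ≤ 1)
    {A : Set Y} (hA : ∀ y, 0 < g y → y ∈ A) : P.I g ≤ P.m A := by
  refine le_csInf (P.m_nonempty A) ?_
  rintro x ⟨h, hh, rfl⟩
  have hgh : g ≤ h := fun y => by
    rcases lt_or_ge 0 (g y) with h0 | h0
    · rw [hh.2.2 y (hA y h0)]; exact hg1 y
    · exact le_trans h0 (hh.1.choose_spec.nonneg P y)
  exact P.le_J hg hgh hh.2.1

theorem m_le_I {g : Y → ℝ} (hg : g ∈ P.V) (hg0 : ∀ y, 0 ≤ g y) (hg1 : ∀ y, g y ≤ 1)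
    {B : Set Y} (hB : ∀ y ∈ B, g y = 1) : P.m B ≤ P.I g := by
  have hcov : P.Cover B g :=
    ⟨⟨fun _ => g, fun _ => hg, monotone_const, fun _ y => hg0 y, fun _ => tendsto_const_nhds⟩,
      hg1, hB⟩
  have := P.m_le_J hcov
  rwa [P.J_of_mem hg hg1] at this

theorem sum_clamp (M : ℕ) (t : ℝ) (ht : 0 ≤ t) :
    ∑ j ∈ Finset.range M, min (max (t - (j : ℝ)) 0) 1 = min t (M : ℝ) := by
  induction M with
  | zero => simp [min_eq_right ht]
  | succ M ih =>
    rw [Finset.sum_range_succ, ih]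
    rcases le_total t (M : ℝ) with h | h
    · rw [min_eq_left h, min_eq_left (le_trans h (by exact_mod_cast Nat.le_succ M)),
        max_eq_right (by linarith)]
      simp
    · rw [min_eq_right h, max_eq_left (by linarith)]
      push_cast
      rcases le_total t ((M : ℝ) + 1) with h2 | h2
      · rw [min_eq_left (show t - (M:ℝ) ≤ 1 by linarith), min_eq_left h2]; ring
      · rw [min_eq_right (show (1:ℝ) ≤ t - (M:ℝ) by linarith), min_eq_right h2]

theorem integrable_of_mem {f : Y → ℝ} (hf : f ∈ P.V) : Integrable f P.mu := by
  letI := P.mSpace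
  haveI := P.isProb
  obtain ⟨C, hC⟩ := P.bded f hf
  refine ⟨(P.meas_f hf).aestronglyMeasurable, ?_⟩
  refine HasFiniteIntegral.of_bounded (C := C) ?_
  exact Filter.Eventually.of_forall (fun y => by simpa [Real.norm_eq_abs] using hC y)

theorem integral_eq01 {f : Y → ℝ} (hf : f ∈ P.V) (hf0 : ∀ y, 0 ≤ f y) (hf1 : ∀ y, f y ≤ 1) :
    P.I f = ∫ y, f y ∂P.mu := by
  letI := P.mSpace
  haveI := P.isProb
  have key : ∀ M : ℕ, 0 < M → |P.I f - ∫ y, f y ∂P.mu| ≤ 1 / M := by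
    intro M hM
    have hMR : (0:ℝ) < M := by exact_mod_cast hM
    set g : ℕ → Y → ℝ := fun j y => min (max ((M:ℝ) * f y - (j:ℝ)) 0) 1 with hgdef
    set A : ℕ → Set Y := fun j => {y | (j:ℝ)/(M:ℝ) < f y} with hAdef
    have hgmem : ∀ j, g j ∈ P.V := by
      intro j
      have h2 := P.clamp_mem hf (M:ℝ) (-(j:ℝ))
      have he : g j = fun y => min (max ((M:ℝ) * f y + -(j:ℝ)) 0) 1 := by
        funext y; simp only [hgdef, sub_eq_add_neg]
      rw [he]; exact h2
    have hg0 : ∀ j y, 0 ≤ g j y := fun j y => le_min (le_max_right _ _) zero_le_one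
    have hg1 : ∀ j y, g j y ≤ 1 := fun j y => min_le_right _ _
    have hsum : ∀ y, ∑ j ∈ Finset.range M, g j y = (M:ℝ) * f y := by
      intro y
      have h1 := sum_clamp M ((M:ℝ) * f y) (mul_nonneg hMR.le (hf0 y))
      rw [min_eq_left (by nlinarith [hf1 y])] at h1
      exact h1
    have hIsum : ∑ j ∈ Finset.range M, P.I (g j) = (M:ℝ) * P.I f := by
      have h1 : (∑ j ∈ Finset.range M, g j) = (M:ℝ) • f := by
        funext y
        rw [Finset.sum_apply]
        simpa using hsum y
      have h2 := P.I_sum (Finset.range M) g (fun j _ => hgmem j)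
      rw [h1, P.I_smul _ _ hf] at h2
      exact h2.symm
    have hAmeas : ∀ j, MeasurableSet[P.mSpace] (A j) := fun j =>
      (P.meas_f hf) measurableSet_Ioi
    have hmA0 : ∀ j, 0 ≤ P.m (A j) := fun j => P.m_nonneg _
    have hmA1 : ∀ j, P.m (A j) ≤ 1 := fun j => P.m_le_one _
    have htoReal : ∀ j, (P.mu (A j)).toReal = P.m (A j) := fun j => by
      rw [P.mu_apply (hAmeas j), ENNReal.toReal_ofReal (hmA0 j)]
    have hup : ∀ j, P.I (g j) ≤ P.m (A j) := by
      intro j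
      refine P.I_le_m (hgmem j) (hg1 j) (fun y hy => ?_)
      have h1 : 0 < max ((M:ℝ) * f y - j) 0 := lt_of_lt_of_le hy (min_le_left _ _)
      have h2 : 0 < (M:ℝ) * f y - j := by
        by_contra hc
        push_neg at hc
        rw [max_eq_right hc] at h1
        exact lt_irrefl 0 h1
      show (j:ℝ)/(M:ℝ) < f y
      rw [div_lt_iff₀ hMR]
      linarith
    have hlow : ∀ j, P.m (A (j+1)) ≤ P.I (g j) := by
      intro j
      refine P.m_le_I (hgmem j) (fun y => hg0 j y) (fun y => hg1 j y) (fun y hy => ?_)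
      have h1 : (((j:ℕ)+1:ℕ):ℝ)/(M:ℝ) < f y := hy
      have h1' : ((j:ℝ)+1)/(M:ℝ) < f y := by push_cast at h1; exact h1
      rw [div_lt_iff₀ hMR] at h1'
      have h2 : (1:ℝ) ≤ (M:ℝ) * f y - j := by linarith
      show min (max ((M:ℝ) * f y - j) 0) 1 = 1
      rw [max_eq_left (by linarith), min_eq_right h2]
    -- indicator comparisons
    have hind_le : ∀ j y, (A (j+1)).indicator (fun _ => (1:ℝ)) y ≤ g j y := by
      intro j y
      rcases Classical.em (y ∈ A (j+1)) with hy | hy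
      · rw [Set.indicator_of_mem hy]
        have h1 : (((j:ℕ)+1:ℕ):ℝ)/(M:ℝ) < f y := hy
        have h1' : ((j:ℝ)+1)/(M:ℝ) < f y := by push_cast at h1; exact h1
        rw [div_lt_iff₀ hMR] at h1'
        have h2 : (1:ℝ) ≤ (M:ℝ) * f y - j := by linarith
        show (1:ℝ) ≤ min (max ((M:ℝ) * f y - j) 0) 1
        exact le_min (le_trans h2 (le_max_left _ _)) le_rfl
      · rw [Set.indicator_of_notMem hy]
        exact hg0 j y
    have hle_ind : ∀ j y, g j y ≤ (A j).indicator (fun _ => (1:ℝ)) y := by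
      intro j y
      rcases Classical.em (y ∈ A j) with hy | hy
      · rw [Set.indicator_of_mem hy]; exact hg1 j y
      · rw [Set.indicator_of_notMem hy]
        have h1 : ¬ ((j:ℝ)/(M:ℝ) < f y) := hy
        push_neg at h1
        have h2 : (M:ℝ) * f y - j ≤ 0 := by
          rw [le_div_iff₀ hMR] at h1
          nlinarith
        show min (max ((M:ℝ) * f y - j) 0) 1 ≤ 0
        rw [max_eq_right h2]
        simp
    set s1 : Y → ℝ := fun y => ∑ j ∈ Finset.range M, (A (j+1)).indicator (fun _ => (1:ℝ)) y
      with hs1def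
    set s2 : Y → ℝ := fun y => ∑ j ∈ Finset.range M, (A j).indicator (fun _ => (1:ℝ)) y
      with hs2def
    have hs1f : ∀ y, s1 y ≤ (M:ℝ) * f y := by
      intro y
      rw [← hsum y]
      exact Finset.sum_le_sum (fun j _ => hind_le j y)
    have hfs2 : ∀ y, (M:ℝ) * f y ≤ s2 y := by
      intro y
      rw [← hsum y]
      exact Finset.sum_le_sum (fun j _ => hle_ind j y)
    have hint_ind : ∀ j, Integrable ((A j).indicator (fun _ => (1:ℝ))) P.mu := fun j =>
      (integrable_const (1:ℝ)).indicator (hAmeas j)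
    have hs1int : Integrable s1 P.mu := by
      rw [hs1def]
      exact integrable_finset_sum _ (fun j _ => hint_ind (j+1))
    have hs2int : Integrable s2 P.mu := by
      rw [hs2def]
      exact integrable_finset_sum _ (fun j _ => hint_ind j)
    have hfint : Integrable (fun y => (M:ℝ) * f y) P.mu :=
      (P.integrable_of_mem hf).const_mul _
    have hintind_val : ∀ j, ∫ y, (A j).indicator (fun _ => (1:ℝ)) y ∂P.mu = P.m (A j) := by
      intro j
      have h1 : ∫ y, (A j).indicator (fun _ => (1:ℝ)) y ∂P.mu
          = ∫ y, (A j).indicator 1 y ∂P.mu := rfl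
      rw [h1, integral_indicator_one (hAmeas j), measureReal_def, htoReal j]
    have hs1val : ∫ y, s1 y ∂P.mu = ∑ j ∈ Finset.range M, P.m (A (j+1)) := by
      rw [hs1def, integral_finset_sum _ (fun j _ => hint_ind (j+1))]
      exact Finset.sum_congr rfl (fun j _ => hintind_val (j+1))
    have hs2val : ∫ y, s2 y ∂P.mu = ∑ j ∈ Finset.range M, P.m (A j) := by
      rw [hs2def, integral_finset_sum _ (fun j _ => hint_ind j)]
      exact Finset.sum_congr rfl (fun j _ => hintind_val j)
    have hI1 := integral_mono hs1int hfint hs1f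
    have hI2 := integral_mono hfint hs2int hfs2
    have hIf : ∫ y, (M:ℝ) * f y ∂P.mu = (M:ℝ) * ∫ y, f y ∂P.mu := integral_const_mul _ _
    rw [hIf, hs1val] at hI1
    rw [hIf, hs2val] at hI2
    -- telescoping
    have htel : ∑ j ∈ Finset.range M, P.m (A j) - ∑ j ∈ Finset.range M, P.m (A (j+1))
        = P.m (A 0) - P.m (A M) := by
      rw [← Finset.sum_sub_distrib]
      exact Finset.sum_range_sub' (fun j => P.m (A j)) M
    have hIlow : ∑ j ∈ Finset.range M, P.m (A (j+1)) ≤ (M:ℝ) * P.I f := by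
      rw [← hIsum]
      exact Finset.sum_le_sum (fun j _ => hlow j)
    have hIup : (M:ℝ) * P.I f ≤ ∑ j ∈ Finset.range M, P.m (A j) := by
      rw [← hIsum]
      exact Finset.sum_le_sum (fun j _ => hup j)
    rw [abs_le]
    constructor
    · rw [neg_le, ← sub_nonneg]
      have h3 : (M:ℝ) * (1/M + (P.I f - ∫ y, f y ∂P.mu)) ≥ 0 := by
        have hb0 := hmA0 M
        have hb1 := hmA1 0
        have : (M:ℝ) * (1/M) = 1 := by field_simp
        nlinarith
      nlinarith
    · rw [← sub_nonneg]
      have h3 : (M:ℝ) * (1/M - (P.I f - ∫ y, f y ∂P.mu)) ≥ 0 := by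
        have hb0 := hmA0 M
        have hb1 := hmA1 0
        have : (M:ℝ) * (1/M) = 1 := by field_simp
        nlinarith
      nlinarith
  by_contra hne
  have habs : 0 < |P.I f - ∫ y, f y ∂P.mu| := abs_pos.2 (sub_ne_zero.2 hne)
  obtain ⟨M, hM⟩ := exists_nat_one_div_lt habs
  have h2 := key (M+1) (Nat.succ_pos M)
  have : (1:ℝ) / ((M:ℝ)+1) = 1 / ((M+1 : ℕ):ℝ) := by push_cast; ring
  linarith [hM, h2, this ▸ hM]

theorem integral_eq {f : Y → ℝ} (hf : f ∈ P.V) : P.I f = ∫ y, f y ∂P.mu := by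
  letI := P.mSpace
  haveI := P.isProb
  obtain ⟨C, hC⟩ := P.bded f hf
  set c : ℝ := |C| + 1 with hcdef
  have hc : 0 < c := by positivity
  have hCc : ∀ y, |f y| ≤ c := fun y => le_trans (hC y) (by
    have := le_abs_self C; linarith)
  set g : Y → ℝ := fun y => f y / (2*c) + 1/2 with hgdef
  have hgmem : g ∈ P.V := by
    have h1 := P.add_mem _ (P.smul_mem (1/(2*c)) f hf) _ (P.smul_mem ((1:ℝ)/2) _ P.one_mem)
    have he : g = (1/(2*c)) • f + ((1:ℝ)/2) • (fun _ => (1:ℝ)) := by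
      funext y
      simp only [hgdef, Pi.add_apply, Pi.smul_apply, smul_eq_mul]
      ring
    rw [he]; exact h1
  have hg0 : ∀ y, 0 ≤ g y := by
    intro y
    have h1 := abs_le.1 (hCc y)
    simp only [hgdef]
    have h2 : -(1/2 : ℝ) ≤ f y / (2*c) := by
      rw [neg_le, ← neg_div]
      rw [div_le_div_iff₀ (by positivity) (by positivity)]
      nlinarith
    linarith
  have hg1 : ∀ y, g y ≤ 1 := by
    intro y
    have h1 := abs_le.1 (hCc y)
    simp only [hgdef]
    have h2 : f y / (2*c) ≤ 1/2 := by
      rw [div_le_div_iff₀ (by positivity) (by positivity)]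
      nlinarith
    linarith
  have h01 := P.integral_eq01 hgmem hg0 hg1
  have hIg : P.I g = P.I f / (2*c) + 1/2 := by
    have he : g = (1/(2*c)) • f + ((1:ℝ)/2) • (fun _ => (1:ℝ)) := by
      funext y
      simp only [hgdef, Pi.add_apply, Pi.smul_apply, smul_eq_mul]
      ring
    rw [he, P.I_add _ (P.smul_mem _ _ hf) _ (P.smul_mem _ _ P.one_mem),
      P.I_smul _ _ hf, P.I_smul _ _ P.one_mem, P.I_one]
    ring
  have hInt : ∫ y, g y ∂P.mu = (∫ y, f y ∂P.mu) / (2*c) + 1/2 := by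
    have h1 : Integrable (fun y => f y / (2*c)) P.mu := (P.integrable_of_mem hf).div_const _
    have h2 : Integrable (fun _ : Y => (1/2 : ℝ)) P.mu := integrable_const _
    rw [hgdef]
    rw [integral_add h1 h2, integral_div, integral_const]
    simp [measure_univ]
  rw [hIg, hInt] at h01
  have h2c : (2*c) ≠ 0 := by positivity
  field_simp at h01
  linarith

end Pre
end DanST

theorem stmt19 {Y : Type*} (V : Set (Y → ℝ)) (L : (Y → ℝ) → ℝ)
    (hbd : ∀ f ∈ V, ∃ C : ℝ, ∀ y, |f y| ≤ C)
    (h1 : (fun _ => (1 : ℝ)) ∈ V)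
    (haddV : ∀ f ∈ V, ∀ g ∈ V, f + g ∈ V)
    (hsmulV : ∀ (c : ℝ), ∀ f ∈ V, c • f ∈ V)
    (hmaxV : ∀ f ∈ V, ∀ g ∈ V, f ⊔ g ∈ V)
    (hmin1V : ∀ f ∈ V, f ⊓ (fun _ => (1 : ℝ)) ∈ V)
    (hLadd : ∀ f ∈ V, ∀ g ∈ V, L (f + g) = L f + L g)
    (hLsmul : ∀ (c : ℝ), ∀ f ∈ V, L (c • f) = c * L f)
    (hLpos : ∀ f ∈ V, (∀ y, 0 ≤ f y) → 0 ≤ L f)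
    (hL1 : 0 < L (fun _ => (1 : ℝ)))
    (hLcont : ∀ g : ℕ → Y → ℝ, (∀ n, g n ∈ V) →
      (∀ y, Antitone fun n => g n y) →
      (∀ y, Filter.Tendsto (fun n => g n y) Filter.atTop (nhds 0)) →
      Filter.Tendsto (fun n => L (g n)) Filter.atTop (nhds 0)) :
    letI m : MeasurableSpace Y := ⨆ f ∈ V, MeasurableSpace.comap f (borel ℝ)
    ∃ μ : Measure Y, IsProbabilityMeasure μ ∧
      ∀ f ∈ V, L f = L (fun _ => (1 : ℝ)) * ∫ y, f y ∂μ := by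
  have hL1' : L (fun _ => (1 : ℝ)) ≠ 0 := ne_of_gt hL1
  set P : DanST.Pre Y :=
    { V := V
      I := fun f => L f / L (fun _ => (1 : ℝ))
      bded := hbd
      one_mem := h1
      add_mem := haddV
      smul_mem := hsmulV
      max_mem := hmaxV
      I_add := fun f hf g hg => by rw [hLadd f hf g hg]; ring
      I_smul := fun c f hf => by rw [hLsmul c f hf]; ring
      I_pos := fun f hf h0 => div_nonneg (hLpos f hf h0) hL1.le
      I_one := div_self hL1'
      I_cont := fun g hg ha ht => by
        simpa using (hLcont g hg ha ht).div_const (L (fun _ => (1 : ℝ))) } with hPdef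
  show ∃ μ : @Measure Y (⨆ f ∈ V, MeasurableSpace.comap f (borel ℝ)),
      IsProbabilityMeasure μ ∧ ∀ f ∈ V, L f = L (fun _ => (1 : ℝ)) * ∫ y, f y ∂μ
  refine ⟨P.mu, P.isProb, fun f hf => ?_⟩
  have h2 := P.integral_eq (f := f) hf
  have h3 : P.I f = L f / L (fun _ => (1 : ℝ)) := rfl
  rw [h3] at h2
  have h4 : L f = L (fun _ => (1 : ℝ)) * (L f / L (fun _ => (1 : ℝ))) := by field_simp
  exact h4.trans (congrArg (L (fun _ => (1 : ℝ)) * ·) h2)
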